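/- Let H, S be Hermitian with S positive definite, z ∈ ℂ with nonzero imaginary part. Then H - zS is invertible, and for u = (H - zS)^{-1}b the S-norm bound ‖u‖_S ≤ ‖Ψ*b‖_2 / min_i |λ_i - z| holds, where λ_i are the generalized eigenvalues and Ψ satisfies Ψ*HΨ = Λ, Ψ*SΨ = I. -/

import Mathlib

open Matrix
open scoped ComplexOrder

/-- For a Hermitian pencil `(H, S)` with `S` positive definite and a shift `z` with
nonzero imaginary part, `H - zS` is invertible and the solution `u = (H - zS)⁻¹ b`
satisfies `‖u‖_S ≤ ‖Ψᴴ b‖₂ / min_i |λ_i - z|`. -/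
theorem shifted_solution_S_norm_bound {N : ℕ} (hN : 0 < N)
    (H S Ψ : Matrix (Fin N) (Fin N) ℂ)
    (hH : H.IsHermitian) (hS : S.PosDef) (hΨ : IsUnit Ψ.det)
    (d : Fin N → ℝ)
    (hdiag : Ψᴴ * H * Ψ = Matrix.diagonal fun i => (d i : ℂ))
    (horth : Ψᴴ * S * Ψ = 1)
    (z : ℂ) (hz : z.im ≠ 0) (b : Fin N → ℂ) :
    IsUnit (H - z • S).det ∧
      Real.sqrt (star ((H - z • S)⁻¹.mulVec b) ⬝ᵥ
          S.mulVec ((H - z • S)⁻¹.mulVec b)).re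
        ≤ Real.sqrt (star (Ψᴴ.mulVec b) ⬝ᵥ (Ψᴴ.mulVec b)).re /
            Finset.univ.inf' ⟨⟨0, hN⟩, Finset.mem_univ _⟩
              (fun i => ‖(d i : ℂ) - z‖) := by
  have hne : ∀ i, ((d i : ℂ) - z) ≠ 0 := by
    intro i h
    apply hz
    have : ((d i : ℂ) - z).im = 0 := by rw [h]; simp
    simpa using this.symm
  -- key conjugation identity
  have hKey : Ψᴴ * (H - z • S) * Ψ = Matrix.diagonal (fun i => (d i : ℂ) - z) := by
    have : Ψᴴ * (H - z • S) * Ψ = Ψᴴ * H * Ψ - z • (Ψᴴ * S * Ψ) := by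
      rw [Matrix.mul_sub, Matrix.sub_mul, Matrix.mul_smul, Matrix.smul_mul]
    rw [this, hdiag, horth]
    ext i j
    by_cases h : i = j <;> simp [Matrix.diagonal, Matrix.one_apply, h, Matrix.sub_apply]
  have hΨH : IsUnit Ψᴴ.det := by
    rw [Matrix.det_conjTranspose]
    exact hΨ.star
  have hDdet : IsUnit (Matrix.diagonal (fun i => (d i : ℂ) - z)).det := by
    rw [Matrix.det_diagonal]
    exact (Finset.prod_ne_zero_iff.2 fun i _ => hne i).isUnit
  have hA : IsUnit (H - z • S).det := by
    have := hDdet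
    rw [← hKey, Matrix.det_mul, Matrix.det_mul] at this
    exact (IsUnit.mul_iff.1 ((IsUnit.mul_iff.1 this).1)).2
  refine ⟨hA, ?_⟩
  set c : Fin N → ℂ := Ψᴴ.mulVec b with hc
  set w : Fin N → ℂ := fun i => ((d i : ℂ) - z)⁻¹ * c i with hw
  -- the explicit solution
  have hsol : (H - z • S).mulVec (Ψ.mulVec w) = b := by
    have h1 : (H - z • S) * Ψ = (Ψᴴ)⁻¹ * Matrix.diagonal (fun i => (d i : ℂ) - z) := by
      rw [← hKey, ← Matrix.mul_assoc, ← Matrix.mul_assoc,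
        Matrix.nonsing_inv_mul _ hΨH, Matrix.one_mul]
    have h2 : (Matrix.diagonal (fun i => (d i : ℂ) - z)).mulVec w = c := by
      funext i
      simp only [Matrix.mulVec_diagonal, hw]
      rw [← mul_assoc, mul_inv_cancel₀ (hne i), one_mul]
    rw [Matrix.mulVec_mulVec, h1, ← Matrix.mulVec_mulVec, h2, hc,
      Matrix.mulVec_mulVec, Matrix.nonsing_inv_mul _ hΨH, Matrix.one_mulVec]
  have hu : (H - z • S)⁻¹.mulVec b = Ψ.mulVec w := by
    rw [← hsol, Matrix.mulVec_mulVec, Matrix.nonsing_inv_mul _ hA, Matrix.one_mulVec]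
  -- quadratic form computation
  have hform : star ((H - z • S)⁻¹.mulVec b) ⬝ᵥ S.mulVec ((H - z • S)⁻¹.mulVec b)
      = star w ⬝ᵥ w := by
    rw [hu, Matrix.star_mulVec, Matrix.mulVec_mulVec, Matrix.dotProduct_mulVec,
      Matrix.vecMul_vecMul, ← Matrix.mul_assoc, horth, Matrix.vecMul_one]
  rw [hform]
  -- now real estimates
  set m := Finset.univ.inf' ⟨⟨0, hN⟩, Finset.mem_univ (⟨0, hN⟩ : Fin N)⟩
      (fun i => ‖(d i : ℂ) - z‖) with hm
  have hmpos : 0 < m := by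
    rw [hm]; refine (Finset.lt_inf'_iff _).2 ?_
    intro i _
    exact norm_pos_iff.2 (hne i)
  have hmle : ∀ i, m ≤ ‖(d i : ℂ) - z‖ := fun i =>
    Finset.inf'_le _ (Finset.mem_univ i)
  have hre1 : (star w ⬝ᵥ w).re = ∑ i, Complex.normSq (w i) := by
    rw [dotProduct, Complex.re_sum]
    congr 1; funext i
    simp [Complex.mul_re, Complex.normSq_apply]
  have hre2 : (star c ⬝ᵥ c).re = ∑ i, Complex.normSq (c i) := by
    rw [dotProduct, Complex.re_sum]
    congr 1; funext i
    simp [Complex.mul_re, Complex.normSq_apply]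
  rw [hre1, hre2]
  have hbound : ∑ i, Complex.normSq (w i) ≤ (∑ i, Complex.normSq (c i)) / m ^ 2 := by
    rw [Finset.sum_div]
    apply Finset.sum_le_sum
    intro i _
    rw [hw]
    simp only [Complex.normSq_mul, Complex.normSq_inv]
    rw [div_eq_mul_inv, mul_comm (Complex.normSq (c i))]
    apply mul_le_mul_of_nonneg_right _ (Complex.normSq_nonneg _)
    apply inv_anti₀ (by positivity)
    rw [Complex.normSq_eq_norm_sq]
    exact pow_le_pow_left₀ hmpos.le (hmle i) 2
  calc Real.sqrt (∑ i, Complex.normSq (w i))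
      ≤ Real.sqrt ((∑ i, Complex.normSq (c i)) / m ^ 2) := Real.sqrt_le_sqrt hbound
    _ = Real.sqrt (∑ i, Complex.normSq (c i)) / m := by
        rw [Real.sqrt_div (Finset.sum_nonneg fun i _ => Complex.normSq_nonneg _),
          Real.sqrt_sq hmpos.le]
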